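/- Suppose additionally that y >= sqrt(1 - x^2) + sqrt(3) (region R3_3). Then the optimal radius for packings of 3 equal circles satisfies r_3(x,y) = 1/2. -/
import Mathlib

noncomputable section
set_option linter.unusedSectionVars false
set_option maxHeartbeats 1000000

/-- The point `(a, b)` in the Euclidean plane. -/
def pt (a b : ℝ) : EuclideanSpace ℝ (Fin 2) :=
  (WithLp.equiv 2 (Fin 2 → ℝ)).symm ![a, b]

/-- The lattice generated by `v1 = (1,0)` and `v2 = (x,y)`. -/
def TLat (x y : ℝ) : Set (EuclideanSpace ℝ (Fin 2)) :=
  {v | ∃ m n : ℤ, v = (m : ℝ) • pt 1 0 + (n : ℝ) • pt x y}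

/-- `p` is a packing of `k` equal circles of radius `r` on the flat torus `ℝ²/Λ(x,y)`. -/
def IsPacking (x y : ℝ) {k : ℕ} (r : ℝ) (p : Fin k → EuclideanSpace ℝ (Fin 2)) : Prop :=
  ∀ i j : Fin k, ∀ l ∈ TLat x y, (i ≠ j ∨ l ≠ 0) → 2 * r ≤ ‖p i - p j + l‖

/-- The optimal (supremal) radius for packings of `k` equal circles on the torus `ℝ²/Λ(x,y)`. -/
def optRadius (x y : ℝ) (k : ℕ) : ℝ :=
  sSup {r : ℝ | 0 ≤ r ∧ ∃ p : Fin k → EuclideanSpace ℝ (Fin 2), IsPacking x y r p}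

lemma norm_pt (a b : ℝ) : ‖pt a b‖ = Real.sqrt (a^2 + b^2) := by
  rw [EuclideanSpace.norm_eq]
  simp [pt, Fin.sum_univ_two, Real.norm_eq_abs, sq_abs]

lemma comb (a b c d x y : ℝ) (m n : ℤ) :
    pt a b - pt c d + ((m:ℝ) • pt 1 0 + (n:ℝ) • pt x y)
      = pt (a - c + m + n*x) (b - d + n*y) := by
  ext i
  fin_cases i <;> simp [pt] <;> ring

lemma two_half_le (E : ℝ) (h : 1 ≤ E) : 2*(1/2 : ℝ) ≤ Real.sqrt E := by
  have h2 := Real.sqrt_le_sqrt h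
  rw [Real.sqrt_one] at h2
  linarith

lemma mfact1 (m : ℤ) : 0 ≤ (m:ℝ) * (m+1) := by
  have : 0 ≤ m * (m+1) := by rcases le_or_gt 0 m with h|h <;> nlinarith
  exact_mod_cast this

lemma nsq (n : ℤ) (hn : n ≠ 0) : (1:ℝ) ≤ (n:ℝ)^2 := by
  have : 1 ≤ n^2 := by rcases hn.lt_or_gt with h|h <;> nlinarith
  exact_mod_cast this

section Ineq
variable {x y s a : ℝ} (hs2 : s^2 = 3) (hs1 : 1 ≤ s) (ha0 : s/2 ≤ a) (ha1 : a ≤ 1)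
  (ha2 : a^2 = 1 - x^2) (hx0 : 0 ≤ x) (hx1 : x ≤ 1/2) (hy : a + s ≤ y)

include hs2 hs1 ha0 ha1 ha2 hx0 hx1 hy

lemma ineq_diag (m n : ℤ) (hmn : ¬ (m = 0 ∧ n = 0)) :
    1 ≤ ((m:ℝ) + n*x)^2 + ((n:ℝ)*y)^2 := by
  rcases eq_or_ne n 0 with rfl | hn
  · have hm : m ≠ 0 := by tauto
    have h1 := nsq m hm
    push_cast; nlinarith
  · have h1 := nsq n hn
    have hy2 : (9/4:ℝ) ≤ y^2 := by nlinarith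
    have h2 : (1:ℝ)*(9/4) ≤ (n:ℝ)^2 * y^2 :=
      mul_le_mul h1 hy2 (by norm_num) (by positivity)
    nlinarith [sq_nonneg ((m:ℝ) + n*x)]

lemma ineq_p10 (m n : ℤ) : 1 ≤ ((1:ℝ)/2 + m + n*x)^2 + (s/2 + n*y)^2 := by
  have hy0 : (0:ℝ) ≤ y := by linarith
  have hn : n = 0 ∨ n = 1 ∨ n = -1 ∨ n ≤ -2 ∨ 2 ≤ n := by omega
  rcases hn with rfl|rfl|rfl|h|h
  · push_cast; nlinarith [mfact1 m]
  · push_cast; nlinarith [sq_nonneg ((1:ℝ)/2 + m + x)]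
  · push_cast; nlinarith [sq_nonneg ((1:ℝ)/2 + m - x)]
  · have hn' : (n:ℝ) ≤ -2 := by exact_mod_cast h
    have h2 : (n:ℝ)*y ≤ -2*y := by nlinarith
    nlinarith [sq_nonneg ((1:ℝ)/2 + m + n*x), sq_nonneg (s/2 + n*y + 2)]
  · have hn' : (2:ℝ) ≤ n := by exact_mod_cast h
    have h2 : 2*y ≤ (n:ℝ)*y := by nlinarith
    nlinarith [sq_nonneg ((1:ℝ)/2 + m + n*x), sq_nonneg (s/2 + n*y - 2)]

lemma ineq_p20 (m n : ℤ) : 1 ≤ (x + 1/2 + m + n*x)^2 + (s/2 + a + n*y)^2 := by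
  have hy0 : (0:ℝ) ≤ y := by linarith
  have hn : n = 0 ∨ n = 1 ∨ n = -1 ∨ n ≤ -2 ∨ 2 ≤ n := by omega
  rcases hn with rfl|rfl|rfl|h|h
  · push_cast; nlinarith [sq_nonneg (x + 1/2 + (m:ℝ)), sq_nonneg (s/2 + a - s)]
  · push_cast; nlinarith [sq_nonneg (x + 1/2 + (m:ℝ) + x), sq_nonneg (s/2 + a + y - 2)]
  · push_cast
    have hU : x + 1/2 + (m:ℝ) + (-1)*x = (m:ℝ) + 1/2 := by ring
    nlinarith [mfact1 m, sq_nonneg (s/2 + a + (-1)*y + s/2)]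
  · have hn' : (n:ℝ) ≤ -2 := by exact_mod_cast h
    have h2 : (n:ℝ)*y ≤ -2*y := by nlinarith
    nlinarith [sq_nonneg (x + 1/2 + (m:ℝ) + n*x), sq_nonneg (s/2 + a + n*y + 2)]
  · have hn' : (2:ℝ) ≤ n := by exact_mod_cast h
    have h2 : 2*y ≤ (n:ℝ)*y := by nlinarith
    nlinarith [sq_nonneg (x + 1/2 + (m:ℝ) + n*x), sq_nonneg (s/2 + a + n*y - 2)]

lemma ineq_p21 (m n : ℤ) : 1 ≤ (x + m + n*x)^2 + (a + n*y)^2 := by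
  have hy0 : (0:ℝ) ≤ y := by linarith
  have hn : n = 0 ∨ n = 1 ∨ n = -1 ∨ n ≤ -2 ∨ 2 ≤ n := by omega
  rcases hn with rfl|rfl|rfl|h|h
  · push_cast
    rcases eq_or_ne m 0 with rfl|hm
    · push_cast; nlinarith
    · have h1 := nsq m hm
      have h2 : (0:ℝ) ≤ (m:ℝ)*(m:ℝ) + 2*x*m := by
        rcases le_or_gt 0 m with h|h
        · have : (0:ℝ) ≤ (m:ℝ) := by exact_mod_cast h
          nlinarith
        · have hm1 : m ≤ -1 := by omega
          have : (m:ℝ) ≤ -1 := by exact_mod_cast hm1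
          nlinarith
      nlinarith
  · push_cast; nlinarith [sq_nonneg (x + (m:ℝ) + x), sq_nonneg (a + y - 2)]
  · push_cast; nlinarith [sq_nonneg (x + (m:ℝ) - x), sq_nonneg (a + (-1)*y + s)]
  · have hn' : (n:ℝ) ≤ -2 := by exact_mod_cast h
    have h2 : (n:ℝ)*y ≤ -2*y := by nlinarith
    nlinarith [sq_nonneg (x + (m:ℝ) + n*x), sq_nonneg (a + n*y + 2)]
  · have hn' : (2:ℝ) ≤ n := by exact_mod_cast h
    have h2 : 2*y ≤ (n:ℝ)*y := by nlinarith
    nlinarith [sq_nonneg (x + (m:ℝ) + n*x), sq_nonneg (a + n*y - 2)]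

end Ineq

theorem three_circles_region_R3 (x y : ℝ) (hxy : 1 ≤ x ^ 2 + y ^ 2) (hy : 0 < y) (hx0 : 0 ≤ x) (hx1 : x ≤ 1 / 2)
    (hreg : Real.sqrt (1 - x ^ 2) + Real.sqrt 3 ≤ y)
    : optRadius x y 3 = 1 / 2 := by
  set s : ℝ := Real.sqrt 3 with hs_def
  set a : ℝ := Real.sqrt (1 - x ^ 2) with ha_def
  have hx2 : x^2 ≤ 1/4 := by nlinarith
  have hs2 : s^2 = 3 := Real.sq_sqrt (by norm_num)
  have hs_nonneg : 0 ≤ s := Real.sqrt_nonneg 3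
  have hs1 : 1 ≤ s := by nlinarith
  have ha2 : a^2 = 1 - x^2 := Real.sq_sqrt (by nlinarith)
  have ha_nonneg : 0 ≤ a := Real.sqrt_nonneg _
  have ha0 : s/2 ≤ a := by nlinarith
  have ha1 : a ≤ 1 := by nlinarith
  have hya : a + s ≤ y := hreg
  -- the explicit packing
  set p : Fin 3 → EuclideanSpace ℝ (Fin 2) :=
    ![pt 0 0, pt (1/2) (s/2), pt (x+1/2) (s/2 + a)] with hp_def
  have hpack : IsPacking x y (1/2 : ℝ) p := by
    intro i j l hl hc
    obtain ⟨m, n, rfl⟩ := hl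
    have hdiag : ∀ u v : ℝ, ¬ (m = 0 ∧ n = 0) →
        2 * (1/2:ℝ) ≤ ‖pt u v - pt u v + ((m:ℝ) • pt 1 0 + (n:ℝ) • pt x y)‖ := by
      intro u v hmn
      rw [comb, norm_pt]
      apply two_half_le
      have := ineq_diag hs2 hs1 ha0 ha1 ha2 hx0 hx1 hya m n hmn
      ring_nf at this ⊢
      linarith
    fin_cases i <;> fin_cases j <;>
      simp only [hp_def, Fin.reduceFinMk, Fin.mk_zero, Fin.mk_one, Matrix.cons_val_zero,
        Matrix.cons_val_one, Matrix.head_cons, Matrix.cons_val_two, Matrix.tail_cons]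
    -- (0,0)
    · apply hdiag
      rintro ⟨rfl, rfl⟩
      have hl0 := hc.resolve_left (not_not_intro rfl)
      apply hl0; push_cast; simp
    -- (0,1)
    · rw [comb, norm_pt]
      apply two_half_le
      have := ineq_p10 hs2 hs1 ha0 ha1 ha2 hx0 hx1 hya (-m) (-n)
      push_cast at this
      ring_nf at this ⊢
      linarith
    -- (0,2)
    · rw [comb, norm_pt]
      apply two_half_le
      have := ineq_p20 hs2 hs1 ha0 ha1 ha2 hx0 hx1 hya (-m) (-n)
      push_cast at this
      ring_nf at this ⊢
      linarith
    -- (1,0)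
    · rw [comb, norm_pt]
      apply two_half_le
      have := ineq_p10 hs2 hs1 ha0 ha1 ha2 hx0 hx1 hya m n
      ring_nf at this ⊢
      linarith
    -- (1,1)
    · apply hdiag
      rintro ⟨rfl, rfl⟩
      have hl0 := hc.resolve_left (not_not_intro rfl)
      apply hl0; push_cast; simp
    -- (1,2)
    · rw [comb, norm_pt]
      apply two_half_le
      have := ineq_p21 hs2 hs1 ha0 ha1 ha2 hx0 hx1 hya (-m) (-n)
      push_cast at this
      ring_nf at this ⊢
      linarith
    -- (2,0)
    · rw [comb, norm_pt]
      apply two_half_le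
      have := ineq_p20 hs2 hs1 ha0 ha1 ha2 hx0 hx1 hya m n
      ring_nf at this ⊢
      linarith
    -- (2,1)
    · rw [comb, norm_pt]
      apply two_half_le
      have := ineq_p21 hs2 hs1 ha0 ha1 ha2 hx0 hx1 hya m n
      ring_nf at this ⊢
      linarith
    -- (2,2)
    · apply hdiag
      rintro ⟨rfl, rfl⟩
      have hl0 := hc.resolve_left (not_not_intro rfl)
      apply hl0; push_cast; simp
  have hmem : (1/2 : ℝ) ∈ {r : ℝ | 0 ≤ r ∧ ∃ q : Fin 3 → EuclideanSpace ℝ (Fin 2), IsPacking x y r q} :=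
    ⟨by norm_num, p, hpack⟩
  have hn1 : ‖pt 1 0‖ = 1 := by rw [norm_pt]; norm_num
  have hub : ∀ r ∈ {r : ℝ | 0 ≤ r ∧ ∃ q : Fin 3 → EuclideanSpace ℝ (Fin 2), IsPacking x y r q},
      r ≤ 1/2 := by
    rintro r ⟨hr0, q, hq⟩
    have h1 : pt 1 0 ∈ TLat x y := ⟨1, 0, by push_cast; simp⟩
    have hne : (pt 1 0 : EuclideanSpace ℝ (Fin 2)) ≠ 0 := by
      intro h
      rw [h, norm_zero] at hn1
      norm_num at hn1
    have := hq 0 0 _ h1 (Or.inr hne)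
    rw [sub_self, zero_add, hn1] at this
    linarith
  have hne : {r : ℝ | 0 ≤ r ∧ ∃ q : Fin 3 → EuclideanSpace ℝ (Fin 2), IsPacking x y r q}.Nonempty :=
    ⟨1/2, hmem⟩
  have hbdd : BddAbove {r : ℝ | 0 ≤ r ∧ ∃ q : Fin 3 → EuclideanSpace ℝ (Fin 2), IsPacking x y r q} :=
    ⟨1/2, hub⟩
  exact le_antisymm (csSup_le hne hub) (le_csSup hbdd hmem)
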